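/- If V is an R-submodule of M with dim V > k, then ∑_{U} η_V(U) 1_U = 0 as a function M → ℚ, where the sum runs over all R-submodules U of M and 1_U is the indicator function of U; equivalently, for every x ∈ M, ∑_{U : x ∈ U ⊆ V} (−1)^{dim V − dim U} q^{binom(dim V − dim U, 2)} = 0, the sum running over all R-submodules U of V containing x. -/

import Mathlib

variable (F : Type) [Field F] [Fintype F] (k m : ℕ)

/-- The matrix module `M = M_{k×m}(F)` as a left module over `R = M_{k×k}(F)`
via matrix multiplication. -/
instance matSMul : SMul (Matrix (Fin k) (Fin k) F) (Matrix (Fin k) (Fin m) F) :=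
  ⟨fun A X => A * X⟩

instance matModule : Module (Matrix (Fin k) (Fin k) F) (Matrix (Fin k) (Fin m) F) where
  one_smul X := Matrix.one_mul X
  mul_smul A B X := Matrix.mul_assoc A B X
  smul_zero A := Matrix.mul_zero A
  smul_add A X Y := Matrix.mul_add A X Y
  add_smul A B X := Matrix.add_mul A B X
  zero_smul X := Matrix.zero_mul X

instance matTower :
    IsScalarTower F (Matrix (Fin k) (Fin k) F) (Matrix (Fin k) (Fin m) F) :=
  ⟨fun c A X => Matrix.smul_mul c A X⟩

noncomputable instance :
    Fintype (Submodule (Matrix (Fin k) (Fin k) F) (Matrix (Fin k) (Fin m) F)) :=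
  Fintype.ofFinite _

/-- The dimension of an `R`-submodule `U ⊆ M`, i.e. `dim_{F_q}(U) / k`. -/
noncomputable def dimk
    (U : Submodule (Matrix (Fin k) (Fin k) F) (Matrix (Fin k) (Fin m) F)) : ℕ :=
  Module.finrank F (U.restrictScalars F) / k

open Classical in
/-- `η_V(U) = (−1)^(dim V − dim U) · q^(binom(dim V − dim U, 2))` if `U ⊆ V`, else `0`. -/
noncomputable def etaV
    (V U : Submodule (Matrix (Fin k) (Fin k) F) (Matrix (Fin k) (Fin m) F)) : ℚ :=
  if U ≤ V then
    (-1 : ℚ) ^ (dimk F k m V - dimk F k m U) *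
      (Fintype.card F : ℚ) ^ ((dimk F k m V - dimk F k m U).choose 2)
  else 0

-- ===== auxiliary development =====
open Module

section Engine

variable {N : Type} [AddCommGroup N] [Module F N] [Fintype N]

omit [Fintype F] in
lemma aux_rank_inf_ker (φ : N →ₗ[F] F) (W : Submodule F N) (u₁ : N) (hu₁ : u₁ ∈ W)
    (hφ : φ u₁ = 1) :
    finrank F (W ⊓ LinearMap.ker φ : Submodule F N) + 1 = finrank F W := by
  set ψ := φ.domRestrict W with hψ
  have hker : LinearMap.ker ψ = Submodule.comap W.subtype (W ⊓ LinearMap.ker φ) := by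
    ext u
    simp [hψ, LinearMap.mem_ker, Submodule.mem_comap, LinearMap.domRestrict_apply,
      Submodule.mem_inf, u.2]
  have hrange : LinearMap.range ψ = ⊤ := by
    rw [eq_top_iff]
    rintro c -
    exact ⟨c • ⟨u₁, hu₁⟩, by simp [hψ, LinearMap.domRestrict_apply, hφ]⟩
  have := LinearMap.finrank_range_add_finrank_ker ψ
  rw [hrange, finrank_top, hker,
    (Submodule.comapSubtypeEquivOfLe (inf_le_left : W ⊓ LinearMap.ker φ ≤ W)).finrank_eq,
    finrank_self] at this
  omega

lemma aux_fiber_card (φ : N →ₗ[F] F) (W : Submodule F N) (u₁ : N) (hu₁ : u₁ ∈ W)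
    (hφ : φ u₁ = 1) [DecidablePred fun u => u ∈ W ∧ φ u = 1] :
    (Finset.univ.filter (fun u => u ∈ W ∧ φ u = 1)).card
      = Fintype.card F ^ (finrank F W - 1) := by
  classical
  have hker : (Finset.univ.filter (fun u => u ∈ W ∧ φ u = 1)).card
      = (Finset.univ.filter (fun u => u ∈ W ⊓ LinearMap.ker φ)).card := by
    apply Finset.card_bij (fun u _ => u - u₁)
    · intro a ha
      simp only [Finset.mem_filter, Finset.mem_univ, true_and] at ha ⊢
      exact ⟨W.sub_mem ha.1 hu₁, by simp [LinearMap.mem_ker, map_sub, ha.2, hφ]⟩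
    · intro a ha b hb hab
      exact by simpa using congrArg (· + u₁) hab
    · intro b hb
      simp only [Finset.mem_filter, Finset.mem_univ, true_and, Submodule.mem_inf,
        LinearMap.mem_ker] at hb
      exact ⟨b + u₁, by simp [Finset.mem_filter, W.add_mem hb.1 hu₁, map_add, hb.2, hφ]⟩
  rw [hker]
  have h2 : (Finset.univ.filter (fun u => u ∈ W ⊓ LinearMap.ker φ)).card
      = Fintype.card (W ⊓ LinearMap.ker φ : Submodule F N) := by
    rw [Fintype.card_subtype]
  rw [h2, card_eq_pow_finrank (K := F), ← aux_rank_inf_ker F φ W u₁ hu₁ hφ]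
  simp

open Classical in
lemma aux_engine [Fintype (Submodule F N)] (X V' : Submodule F N) (hXV : X < V') :
    ∑ W : Submodule F N,
      (if X ≤ W ∧ W ≤ V' then
        (-1:ℚ) ^ (finrank F V' - finrank F W) *
        (Fintype.card F : ℚ) ^ ((finrank F V' - finrank F W).choose 2)
      else 0) = 0 := by
  classical
  set n := finrank F V' with hn
  set qq : ℚ := (Fintype.card F : ℚ) with hq
  have hq0 : qq ≠ 0 := by
    rw [hq]; exact_mod_cast Fintype.card_ne_zero
  set e : Submodule F N → ℕ := fun W => finrank F W with he
  set c : ℕ → ℚ := fun j => (-1:ℚ)^(n-j) * qq^((n-j).choose 2) with hc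
  obtain ⟨v, hvV, hvX⟩ := SetLike.exists_of_lt hXV
  have hv0 : (Submodule.Quotient.mk v : N ⧸ X) ≠ 0 := by
    simpa [Submodule.Quotient.mk_eq_zero] using hvX
  obtain ⟨f, hf⟩ : ∃ f : Module.Dual F (N ⧸ X), f (Submodule.Quotient.mk v) ≠ 0 := by
    by_contra h; push_neg at h
    exact hv0 ((Module.forall_dual_apply_eq_zero_iff F _).mp fun φ => h φ)
  set φ : N →ₗ[F] F := (f (Submodule.Quotient.mk v))⁻¹ • (f.comp X.mkQ) with hφdef
  have hφv : φ v = 1 := by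
    simp only [hφdef, LinearMap.smul_apply, LinearMap.comp_apply, Submodule.mkQ_apply,
      smul_eq_mul]
    exact inv_mul_cancel₀ hf
  have hφX : X ≤ LinearMap.ker φ := by
    intro y hy
    simp [LinearMap.mem_ker, hφdef, (Submodule.Quotient.mk_eq_zero X).mpr hy]
  set K := LinearMap.ker φ with hK
  set S : Finset (Submodule F N) := Finset.univ.filter (fun W => X ≤ W ∧ W ≤ V') with hS
  have step0 : ∑ W : Submodule F N,
      (if X ≤ W ∧ W ≤ V' then
        (-1:ℚ) ^ (n - e W) * qq ^ ((n - e W).choose 2) else 0)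
      = ∑ W ∈ S, c (e W) := by
    rw [hS, Finset.sum_filter]
  rw [step0, ← Finset.sum_filter_add_sum_filter_not S (fun W => W ≤ K) (fun W => c (e W))]
  set SA := S.filter (fun W => W ≤ K) with hSA
  set SB := S.filter (fun W => ¬ W ≤ K) with hSB
  have hSAmem : ∀ W ∈ SA, X ≤ W ∧ W ≤ V' ∧ W ≤ K := by
    intro W hW
    simp only [hSA, hS, Finset.mem_filter, Finset.mem_univ, true_and] at hW
    exact ⟨hW.1.1, hW.1.2, hW.2⟩
  have hSBmem : ∀ W ∈ SB, X ≤ W ∧ W ≤ V' ∧ ¬ W ≤ K := by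
    intro W hW
    simp only [hSB, hS, Finset.mem_filter, Finset.mem_univ, true_and] at hW
    exact ⟨hW.1.1, hW.1.2, hW.2⟩
  have hVK : ¬ V' ≤ K := fun h => by
    have := h hvV; rw [hK, LinearMap.mem_ker, hφv] at this; exact one_ne_zero this
  have hSAlt : ∀ W ∈ SA, e W + 1 ≤ n := by
    intro W hW
    obtain ⟨h1, h2, h3⟩ := hSAmem W hW
    have hvW : v ∉ W := fun hv => by
      have := h3 hv; rw [hK, LinearMap.mem_ker, hφv] at this; exact one_ne_zero this
    have : W < V' := lt_of_le_of_ne h2 (fun h => hvW (h ▸ hvV))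
    exact Submodule.finrank_lt_finrank_of_lt this
  set T : Submodule F N → Finset N := fun W => Finset.univ.filter (fun u => u ∈ W ∧ φ u = 1)
    with hT
  have hTmem : ∀ (W : Submodule F N) (u : N), u ∈ T W ↔ (u ∈ W ∧ φ u = 1) := by
    intro W u; simp [hT]
  have hTcard : ∀ (W : Submodule F N), ¬ W ≤ K → ((T W).card : ℚ) = qq ^ (e W - 1) := by
    intro W hWK
    obtain ⟨u₀, hu₀W, hu₀⟩ : ∃ u₀ ∈ W, φ u₀ ≠ 0 := by
      by_contra h; push_neg at h
      exact hWK (fun u hu => LinearMap.mem_ker.mpr (h u hu))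
    have h1 : ((φ u₀)⁻¹ • u₀) ∈ W := W.smul_mem _ hu₀W
    have h2 : φ ((φ u₀)⁻¹ • u₀) = 1 := by
      rw [map_smul, smul_eq_mul, inv_mul_cancel₀ hu₀]
    rw [hT, aux_fiber_card F φ W _ h1 h2, hq]
    push_cast; rfl
  have stepB : ∑ W ∈ SB, c (e W) = ∑ W' ∈ SA, qq ^ (n-1) * (c (e W' + 1) / qq ^ (e W')) := by
    have h1 : ∀ W ∈ SB, c (e W) = ((T W).card : ℚ) * (c (e W) / qq ^ (e W - 1)) := by
      intro W hW
      rw [hTcard W (hSBmem W hW).2.2, mul_div_cancel₀ _ (pow_ne_zero _ hq0)]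
    rw [Finset.sum_congr rfl h1]
    have h2 : ∀ W ∈ SB, ((T W).card : ℚ) * (c (e W) / qq ^ (e W - 1))
        = ∑ _u ∈ T W, c (e W) / qq ^ (e W - 1) := by
      intro W _; rw [Finset.sum_const, nsmul_eq_mul]
    rw [Finset.sum_congr rfl h2,
      ← Finset.sum_sigma SB T (fun p => c (e p.1) / qq ^ (e p.1 - 1))]
    have h3 : ∀ W' ∈ SA, qq ^ (n-1) * (c (e W' + 1) / qq ^ (e W'))
        = ∑ _u ∈ T V', c (e W' + 1) / qq ^ (e W') := by
      intro W' hW'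
      rw [Finset.sum_const, nsmul_eq_mul, hTcard V' hVK]
    rw [Finset.sum_congr rfl h3,
      ← Finset.sum_sigma SA (fun _ => T V') (fun p => c (e p.1 + 1) / qq ^ (e p.1))]
    apply Finset.sum_bij' (fun p _ => (⟨p.1 ⊓ K, p.2⟩ : Σ _ : Submodule F N, N))
      (fun p _ => (⟨p.1 ⊔ Submodule.span F {p.2}, p.2⟩ : Σ _ : Submodule F N, N))
    · rintro ⟨W, u⟩ hp
      rw [Finset.mem_sigma] at hp ⊢
      obtain ⟨hW, hu⟩ := hp
      obtain ⟨hXW, hWV, hWK⟩ := hSBmem W hW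
      rw [hTmem] at hu
      constructor
      · simp only [hSA, hS, Finset.mem_filter, Finset.mem_univ, true_and]
        exact ⟨⟨le_inf hXW hφX, inf_le_left.trans hWV⟩, inf_le_right⟩
      · rw [hTmem]; exact ⟨hWV hu.1, hu.2⟩
    · rintro ⟨W', u⟩ hp
      rw [Finset.mem_sigma] at hp ⊢
      obtain ⟨hW', hu⟩ := hp
      obtain ⟨hXW', hW'V, hW'K⟩ := hSAmem W' hW'
      rw [hTmem] at hu
      constructor
      · simp only [hSB, hS, Finset.mem_filter, Finset.mem_univ, true_and]
        refine ⟨⟨le_sup_left.trans' hXW', sup_le hW'V ?_⟩, fun h => ?_⟩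
        · rw [Submodule.span_singleton_le_iff_mem]; exact hu.1
        · have := h (Submodule.mem_sup_right (Submodule.mem_span_singleton_self u))
          rw [hK, LinearMap.mem_ker, hu.2] at this
          exact one_ne_zero this
      · rw [hTmem]
        exact ⟨Submodule.mem_sup_right (Submodule.mem_span_singleton_self u), hu.2⟩
    · rintro ⟨W, u⟩ hp
      rw [Finset.mem_sigma] at hp
      obtain ⟨hW, hu⟩ := hp
      rw [hTmem] at hu
      have hWeq : (W ⊓ K) ⊔ Submodule.span F {u} = W := by
        apply le_antisymm
        · exact sup_le inf_le_left
            ((Submodule.span_singleton_le_iff_mem u W).mpr hu.1)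
        · intro w hw
          have hdecomp : w = (w - φ w • u) + φ w • u := by abel
          have hm1 : w - φ w • u ∈ W ⊓ K := by
            rw [Submodule.mem_inf]
            refine ⟨W.sub_mem hw (W.smul_mem _ hu.1), ?_⟩
            rw [hK, LinearMap.mem_ker, map_sub, map_smul, hu.2, smul_eq_mul, mul_one, sub_self]
          have hm2 : φ w • u ∈ Submodule.span F {u} :=
            Submodule.smul_mem _ _ (Submodule.mem_span_singleton_self u)
          exact hdecomp ▸ Submodule.add_mem_sup hm1 hm2
      rw [hWeq]
    · rintro ⟨W', u⟩ hp
      rw [Finset.mem_sigma] at hp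
      obtain ⟨hW', hu⟩ := hp
      obtain ⟨hXW', hW'V, hW'K⟩ := hSAmem W' hW'
      rw [hTmem] at hu
      have hWeq : (W' ⊔ Submodule.span F {u}) ⊓ K = W' := by
        apply le_antisymm
        · intro x hx
          rw [Submodule.mem_inf] at hx
          obtain ⟨hxsup, hxK⟩ := hx
          obtain ⟨y, hy, z, hz, rfl⟩ := Submodule.mem_sup.mp hxsup
          obtain ⟨cc, rfl⟩ := Submodule.mem_span_singleton.mp hz
          have hy0 : φ y = 0 := hW'K hy
          have : φ (y + cc • u) = cc := by
            rw [map_add, map_smul, hy0, hu.2, smul_eq_mul, mul_one, zero_add]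
          rw [hK, LinearMap.mem_ker] at hxK
          rw [hxK] at this
          rw [← this, zero_smul, add_zero]
          exact hy
        · exact le_inf le_sup_left hW'K
      rw [hWeq]
    · rintro ⟨W, u⟩ hp
      rw [Finset.mem_sigma] at hp
      obtain ⟨hW, hu⟩ := hp
      rw [hTmem] at hu
      have h := aux_rank_inf_ker F φ W u hu.1 hu.2
      have h1 : e (W ⊓ K) + 1 = e W := h
      have h2 : e W - 1 = e (W ⊓ K) := by omega
      rw [h2, ← h1]
  rw [stepB, ← Finset.sum_add_distrib]
  apply Finset.sum_eq_zero
  intro W' hW'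
  have hj : e W' + 1 ≤ n := hSAlt W' hW'
  set j := e W' with hjdef
  have e1 : n - j = (n - 1 - j) + 1 := by omega
  have e2 : n - (j+1) = n - 1 - j := by omega
  have e3 : n - 1 = j + (n - 1 - j) := by omega
  set i := n - 1 - j with hidef
  have e4 : (i+1).choose 2 = i.choose 2 + i := by
    rw [Nat.choose_succ_succ i 1, Nat.choose_one_right, Nat.add_comm]
  rw [hc]
  simp only [e1, e2]
  rw [e3, e4, pow_add, pow_add, pow_succ]
  field_simp
  ring

end Engine

-- ===== correspondence between R-submodules and subspaces of F^m =====

set_option linter.unusedSectionVars false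

/-- The submodule of matrices all of whose rows lie in `W`. -/
def fullMod (W : Submodule F (Fin m → F)) :
    Submodule (Matrix (Fin k) (Fin k) F) (Matrix (Fin k) (Fin m) F) where
  carrier := {X | ∀ i, X i ∈ W}
  add_mem' := fun hX hY i => W.add_mem (hX i) (hY i)
  zero_mem' := fun i => W.zero_mem
  smul_mem' := fun A X hX => by
    intro i
    have h1 : (A • X) i = fun c => ∑ j, A i j * X j c := by
      funext c
      show (A * X) i c = _
      rw [Matrix.mul_apply]
    have h2 : (fun c => ∑ j, A i j * X j c) = ∑ j, A i j • X j := by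
      funext c
      rw [Finset.sum_apply]
      simp [Pi.smul_apply, smul_eq_mul]
    rw [h1, h2]
    exact Submodule.sum_mem _ (fun j _ => W.smul_mem _ (hX j))

lemma mem_fullMod (W : Submodule F (Fin m → F)) (X : Matrix (Fin k) (Fin m) F) :
    X ∈ fullMod F k m W ↔ ∀ i, X i ∈ W := Iff.rfl

lemma std_smul_apply (a b : Fin k) (Y : Matrix (Fin k) (Fin m) F) (i : Fin k) (c : Fin m) :
    ((Matrix.single a b (1:F)) • Y) i c = if a = i then Y b c else 0 := by
  show ((Matrix.single a b (1:F)) * Y) i c = _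
  rw [Matrix.mul_apply]
  simp only [Matrix.single, Matrix.of_apply, ite_and, boole_mul]
  by_cases h : a = i
  · subst h; simp
  · simp [h]

lemma fullMod_surjective (hk : 0 < k)
    (U : Submodule (Matrix (Fin k) (Fin k) F) (Matrix (Fin k) (Fin m) F)) :
    ∃ W : Submodule F (Fin m → F), fullMod F k m W = U := by
  classical
  set z : Fin k := ⟨0, hk⟩
  set rowz : Matrix (Fin k) (Fin m) F →ₗ[F] (Fin m → F) :=
    { toFun := fun X => X z
      map_add' := fun X Y => rfl
      map_smul' := fun c X => rfl } with hrowz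
  refine ⟨Submodule.map rowz (U.restrictScalars F), ?_⟩
  ext X
  rw [mem_fullMod]
  constructor
  · intro hX
    choose Y hY hYz using fun i => hX i
    have hXeq : X = ∑ i, (Matrix.single i z (1:F)) • Y i := by
      funext i c
      rw [Matrix.sum_apply]
      rw [Finset.sum_congr rfl (fun i' _ => std_smul_apply F k m i' z (Y i') i c)]
      rw [Finset.sum_ite_eq' Finset.univ i (fun i' => Y i' z c)]
      simp only [Finset.mem_univ, if_true]
      exact (congrFun (hYz i) c).symm
    rw [hXeq]
    exact Submodule.sum_mem _ (fun i _ => Submodule.smul_mem _ _ (hY i))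
  · intro hX i
    refine ⟨(Matrix.single z i (1:F)) • X, Submodule.smul_mem _ _ hX, ?_⟩
    funext c
    show ((Matrix.single z i (1:F)) • X) z c = X i c
    rw [std_smul_apply]
    simp

lemma fullMod_le_iff (hk : 0 < k) (W W' : Submodule F (Fin m → F)) :
    fullMod F k m W ≤ fullMod F k m W' ↔ W ≤ W' := by
  constructor
  · intro h v hv
    have hX : (Matrix.of fun _ _c => v _c : Matrix (Fin k) (Fin m) F) ∈ fullMod F k m W :=
      fun _ => hv
    exact h hX ⟨0, hk⟩
  · intro h X hX i
    exact h (hX i)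

lemma fullMod_injective (hk : 0 < k) :
    Function.Injective (fullMod F k m) := by
  intro W W' h
  exact le_antisymm ((fullMod_le_iff F k m hk W W').mp h.le)
    ((fullMod_le_iff F k m hk W' W).mp h.ge)

/-- Row-wise linear equivalence. -/
def rowsEquiv (W : Submodule F (Fin m → F)) :
    ((fullMod F k m W).restrictScalars F) ≃ₗ[F] (Fin k → W) where
  toFun X := fun i => ⟨(X : Matrix (Fin k) (Fin m) F) i, X.2 i⟩
  map_add' X Y := by funext i; ext c; rfl
  map_smul' a X := by funext i; ext c; rfl
  invFun f := ⟨Matrix.of (fun i c => (f i : Fin m → F) c), fun i => (f i).2⟩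
  left_inv X := by ext i c; rfl
  right_inv f := by funext i; ext c; rfl

lemma dimk_fullMod (hk : 0 < k) (W : Submodule F (Fin m → F)) :
    dimk F k m (fullMod F k m W) = Module.finrank F W := by
  rw [dimk, (rowsEquiv F k m W).finrank_eq, Module.finrank_pi_fintype F]
  simp only [Finset.sum_const, Finset.card_univ, Fintype.card_fin, smul_eq_mul]
  rw [Nat.mul_div_cancel_left _ hk]

lemma mem_fullMod_iff_span (W : Submodule F (Fin m → F)) (x : Matrix (Fin k) (Fin m) F) :
    x ∈ fullMod F k m W ↔ Submodule.span F (Set.range (fun i => x i)) ≤ W := by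
  rw [mem_fullMod, Submodule.span_le]
  constructor
  · rintro h _ ⟨i, rfl⟩; exact h i
  · intro h i; exact h ⟨i, rfl⟩

lemma finrank_span_rows_le (x : Matrix (Fin k) (Fin m) F) :
    Module.finrank F (Submodule.span F (Set.range (fun i => x i))) ≤ k := by
  classical
  have := finrank_span_le_card (R := F) (Set.range (fun i => x i))
  refine this.trans ?_
  rw [Set.toFinset_range]
  exact (Finset.card_image_le).trans (by simp)

noncomputable instance : Fintype (Submodule F (Fin m → F)) := Fintype.ofFinite _

/-- If `V` is an `R`-submodule of `M = M_{k×m}(F_q)` with `dim V > k`, then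
`∑_U η_V(U) 1_U = 0` as a function `M → ℚ`, the sum running over all `R`-submodules
`U` of `M`. -/
theorem sum_etaV_indicator_eq_zero (hk : 0 < k) (hm : m > k)
    (V : Submodule (Matrix (Fin k) (Fin k) F) (Matrix (Fin k) (Fin m) F))
    (hV : dimk F k m V > k) :
    ∀ x : Matrix (Fin k) (Fin m) F,
      ∑ U : Submodule (Matrix (Fin k) (Fin k) F) (Matrix (Fin k) (Fin m) F),
        etaV F k m V U *
          Set.indicator (U : Set (Matrix (Fin k) (Fin m) F)) (fun _ => (1 : ℚ)) x = 0 := by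
  intro x
  classical
  obtain ⟨WV, hWV⟩ := fullMod_surjective F k m hk V
  have hbij : Function.Bijective (fullMod F k m) :=
    ⟨fullMod_injective F k m hk, fun U => fullMod_surjective F k m hk U⟩
  rw [← Function.Bijective.sum_comp hbij
    (fun U => etaV F k m V U * Set.indicator (U : Set (Matrix (Fin k) (Fin m) F))
      (fun _ => (1:ℚ)) x)]
  by_cases hxV : x ∈ V
  · set Xs := Submodule.span F (Set.range (fun i => x i)) with hXs
    have hxspan : Xs ≤ WV := by
      rw [← mem_fullMod_iff_span, hWV]; exact hxV
    have hn : Module.finrank F WV = dimk F k m V := by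
      rw [← hWV, dimk_fullMod F k m hk]
    have hlt : Xs < WV := by
      refine lt_of_le_of_ne hxspan (fun h => ?_)
      have h1 : Module.finrank F WV ≤ k := h ▸ finrank_span_rows_le F k m x
      omega
    refine Eq.trans (Finset.sum_congr rfl fun W _ => ?_) (aux_engine F Xs WV hlt)
    have hle : fullMod F k m W ≤ V ↔ W ≤ WV := by
      rw [← hWV]; exact fullMod_le_iff F k m hk W WV
    have hmem : x ∈ (fullMod F k m W : Set (Matrix (Fin k) (Fin m) F)) ↔ Xs ≤ W :=
      mem_fullMod_iff_span F k m W x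
    have hdW : dimk F k m (fullMod F k m W) = Module.finrank F W := dimk_fullMod F k m hk W
    simp only [etaV, Set.indicator_apply]
    by_cases hA : W ≤ WV
    · by_cases hB : Xs ≤ W
      · rw [if_pos (hle.mpr hA), if_pos (hmem.mpr hB), if_pos ⟨hB, hA⟩, hdW, ← hn, mul_one]
      · rw [if_neg (fun h => hB (hmem.mp h)), if_neg (fun (h : Xs ≤ W ∧ W ≤ WV) => hB h.1), mul_zero]
    · rw [if_neg (fun h => hA (hle.mp h)), if_neg (fun (h : Xs ≤ W ∧ W ≤ WV) => hA h.2), zero_mul]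
  · apply Finset.sum_eq_zero
    intro W _
    simp only [etaV, Set.indicator_apply]
    by_cases h1 : x ∈ (fullMod F k m W : Set (Matrix (Fin k) (Fin m) F))
    · rw [if_neg (fun hle => hxV (hle h1)), zero_mul]
    · rw [if_neg h1, mul_zero]
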